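/- arXiv:1009.5146 — 5 statements merged into one kernel-verified Lean document; each statement's English description precedes it below -/
import Mathlib

section
/- Let h ∈ ℂ^N be a row vector, w ∈ ℂ^N a column vector, ε > 0, and Q an N×N Hermitian positive definite matrix. Then the minimum of |h·w + x·w|² over all row vectors x with √(x Q xᴴ) ≤ ε equals (max(0, |h·w| − ε·√(wᴴ Q⁻¹ w)))². -/
open scoped BigOperators ComplexOrder

lemma aux_disk {E : Type*} [NormedAddCommGroup E] [InnerProductSpace ℂ E]
    (c : ℂ) (u : E) (ε : ℝ) (hε : 0 < ε) :
    IsLeast {v : ℝ | ∃ y : E, ‖y‖ ≤ ε ∧ v = ‖c + inner ℂ y u‖ ^ 2}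
      ((max 0 (‖c‖ - ε * ‖u‖)) ^ 2) := by
  constructor
  · by_cases hu0 : u = 0
    · refine ⟨0, by simpa using hε.le, ?_⟩
      simp [hu0, inner_zero_right, max_eq_right (norm_nonneg c)]
    · have hsu : 0 < ‖u‖ := norm_pos_iff.mpr hu0
      by_cases hc0 : c = 0
      · refine ⟨0, by simpa using hε.le, ?_⟩
        have : ‖c‖ - ε * ‖u‖ ≤ 0 := by
          have : 0 ≤ ε * ‖u‖ := by positivity
          simp only [hc0, norm_zero]; linarith
        rw [max_eq_left this]
        simp [hc0]
      · have hr : 0 < ‖c‖ := norm_pos_iff.mpr hc0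
        set r := ‖c‖ with hrdef
        set su := ‖u‖ with hsudef
        set t : ℝ := min (1 / su ^ 2) (ε / (r * su)) with ht
        have ht1 : t ≤ 1 / su ^ 2 := min_le_left _ _
        have ht2 : t ≤ ε / (r * su) := min_le_right _ _
        have ht0 : 0 < t := lt_min (by positivity) (by positivity)
        refine ⟨(-(t : ℂ) * (starRingEnd ℂ) c) • u, ?_, ?_⟩
        · rw [norm_smul]
          have : ‖-(t : ℂ) * (starRingEnd ℂ) c‖ = t * r := by
            simp [map_mul, abs_of_pos ht0, hrdef]
          rw [this]
          calc t * r * su ≤ (ε / (r * su)) * r * su := by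
                have := mul_le_mul_of_nonneg_right (mul_le_mul_of_nonneg_right ht2 hr.le) hsu.le
                linarith
            _ = ε := by field_simp
        · have hinner : (inner ℂ ((-(t : ℂ) * (starRingEnd ℂ) c) • u) u : ℂ)
              = -(t : ℂ) * c * (su : ℂ) ^ 2 := by
            rw [inner_smul_left, inner_self_eq_norm_sq_to_K, map_mul, map_neg,
              Complex.conj_ofReal, Complex.conj_conj, ← hsudef]
            norm_num
          rw [hinner]
          have hexpr : c + -(t : ℂ) * c * (su : ℂ) ^ 2 = c * ((1 : ℂ) - t * su ^ 2) := by ring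
          rw [hexpr, norm_mul]
          have habs2 : ‖(1 : ℂ) - t * su ^ 2‖ = 1 - t * su ^ 2 := by
            have h1 : t * su ^ 2 ≤ 1 := by
              have := mul_le_mul_of_nonneg_right ht1 (sq_nonneg su)
              rwa [one_div, inv_mul_cancel₀ (by positivity)] at this
            rw [show ((1 : ℂ) - t * su ^ 2) = ((1 - t * su ^ 2 : ℝ) : ℂ) by push_cast; ring]
            rw [Complex.norm_real, Real.norm_eq_abs, abs_of_nonneg (by linarith)]
          rw [habs2]
          rcases min_cases (1 / su ^ 2) (ε / (r * su)) with ⟨hmin, hle⟩ | ⟨hmin, hlt⟩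
          · -- t = 1/su², and 1/su² ≤ ε/(r su) ⇒ r ≤ ε su
            have htval : t = 1 / su ^ 2 := by rw [ht, hmin]
            have hrle : r ≤ ε * su := by
              have := (div_le_div_iff₀ (by positivity) (by positivity)).mp hle
              nlinarith
            rw [max_eq_left (by linarith), htval]
            field_simp
            simp
          · have htval : t = ε / (r * su) := by rw [ht, hmin]
            have hrgt : ε * su < r := by
              have := (div_lt_div_iff₀ (by positivity) (by positivity)).mp hlt
              nlinarith
            rw [max_eq_right (by linarith), htval]
            rw [show r * (1 - ε / (r * su) * su ^ 2) = r - ε * su by field_simp]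
  · rintro v ⟨y, hy, rfl⟩
    have h1 : ‖(inner ℂ y u : ℂ)‖ ≤ ε * ‖u‖ := by
      calc ‖(inner ℂ y u : ℂ)‖ = ‖(inner ℂ y u : ℂ)‖ := rfl
        _ ≤ ‖y‖ * ‖u‖ := norm_inner_le_norm y u
        _ ≤ ε * ‖u‖ := mul_le_mul_of_nonneg_right hy (norm_nonneg u)
    have h2 : ‖c‖ - ε * ‖u‖ ≤ ‖c + inner ℂ y u‖ := by
      have htri := norm_add_le (c + inner ℂ y u) (-(inner ℂ y u : ℂ))
      simp only [add_neg_cancel_right, norm_neg] at htri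
      linarith
    have h3 : max 0 (‖c‖ - ε * ‖u‖) ≤ ‖c + inner ℂ y u‖ :=
      max_le (norm_nonneg _) h2
    exact pow_le_pow_left₀ (le_max_left _ _) h3 2

/-- Robust beamforming lemma (minimum part): for a row vector `h`, column vector `w`,
radius `ε > 0` and Hermitian positive definite `Q`, the minimum of `|h·w + x·w|²`
over row vectors `x` with `√(x Q xᴴ) ≤ ε` equals `(max 0 (|h·w| − ε √(wᴴ Q⁻¹ w)))²`. -/
theorem stmt_0 (N : ℕ) (h w : Fin N → ℂ) (ε : ℝ) (hε : 0 < ε)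
    (Q : Matrix (Fin N) (Fin N) ℂ) (hQ : Q.PosDef) :
    IsLeast {v : ℝ | ∃ x : Fin N → ℂ,
        Real.sqrt (∑ i, ∑ j, x i * Q i j * (starRingEnd ℂ) (x j)).re ≤ ε ∧
        v = ‖∑ i, (h i + x i) * w i‖ ^ 2}
      ((max 0 (‖∑ i, h i * w i‖ -
          ε * Real.sqrt (∑ i, ∑ j, (starRingEnd ℂ) (w i) * Q⁻¹ i j * w j).re)) ^ 2) := by
  classical
  letI instN := Matrix.toNormedAddCommGroup Q hQ
  letI instI := Matrix.toInnerProductSpace Q hQ.posSemidef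
  set u : Fin N → ℂ := Matrix.mulVec Q⁻¹ w with hu
  have hQu : Matrix.mulVec Q u = w := by
    rw [hu, Matrix.mulVec_mulVec, Matrix.mul_nonsing_inv _ hQ.det_pos.ne'.isUnit,
      Matrix.one_mulVec]
  have hinner_def : ∀ a b : Fin N → ℂ,
      (inner ℂ a b : ℂ) = dotProduct (star a) (Matrix.mulVec Q b) := fun a b => dotProduct_comm _ _
  set c : ℂ := ∑ i, h i * w i with hc
  -- (1) the constraint norm
  have key1 : ∀ x : Fin N → ℂ,
      Real.sqrt (∑ i, ∑ j, x i * Q i j * (starRingEnd ℂ) (x j)).re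
        = @norm _ (@SeminormedAddCommGroup.toNorm _ (@NormedAddCommGroup.toSeminormedAddCommGroup _ instN)) (star x) := by
    intro x
    rw [@norm_eq_sqrt_re_inner ℂ (Fin N → ℂ) _ (@NormedAddCommGroup.toSeminormedAddCommGroup _ instN) instI (star x)]
    congr 1
    rw [hinner_def, star_star]
    congr 1
    simp [dotProduct, Matrix.mulVec, Finset.mul_sum, mul_assoc]
  -- (3) the objective
  have key3 : ∀ x : Fin N → ℂ,
      (∑ i, (h i + x i) * w i) = c + inner ℂ (star x) u := by
    intro x
    rw [hinner_def, star_star, hQu]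
    simp [hc, dotProduct, add_mul, Finset.sum_add_distrib]
  -- (2) the radius
  have key2 : Real.sqrt (∑ i, ∑ j, (starRingEnd ℂ) (w i) * Q⁻¹ i j * w j).re
      = @norm _ (@SeminormedAddCommGroup.toNorm _ (@NormedAddCommGroup.toSeminormedAddCommGroup _ instN)) u := by
    rw [@norm_eq_sqrt_re_inner ℂ (Fin N → ℂ) _ (@NormedAddCommGroup.toSeminormedAddCommGroup _ instN) instI u]
    congr 1
    rw [hinner_def, hQu]
    have e1 : (∑ i, ∑ j, (starRingEnd ℂ) (w i) * Q⁻¹ i j * w j)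
        = dotProduct (star w) u := by
      simp [hu, dotProduct, Matrix.mulVec, Finset.mul_sum, mul_assoc]
    rw [e1]
    have e2 : dotProduct (star w) u = (starRingEnd ℂ) (dotProduct (star u) w) := by
      simp [dotProduct, map_sum, mul_comm]
    rw [e2, Complex.conj_re]
    rfl
  have hset : {v : ℝ | ∃ x : Fin N → ℂ,
      Real.sqrt (∑ i, ∑ j, x i * Q i j * (starRingEnd ℂ) (x j)).re ≤ ε ∧
      v = ‖∑ i, (h i + x i) * w i‖ ^ 2}
      = {v : ℝ | ∃ y : Fin N → ℂ,
          @norm _ (@SeminormedAddCommGroup.toNorm _ (@NormedAddCommGroup.toSeminormedAddCommGroup _ instN)) y ≤ ε ∧ v = ‖c + inner ℂ y u‖ ^ 2} := by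
    ext v
    constructor
    · rintro ⟨x, hx1, rfl⟩
      exact ⟨star x, by rwa [key1] at hx1, by rw [key3]⟩
    · rintro ⟨y, hy1, rfl⟩
      refine ⟨star y, ?_, ?_⟩
      · rw [key1, star_star]; exact hy1
      · rw [key3, star_star]
  rw [hset, key2]
  exact @aux_disk (Fin N → ℂ) instN instI c u ε hε
end

section
/- Let h ∈ ℂ^N be a row vector, w ∈ ℂ^N a column vector, ε > 0, and Q an N×N Hermitian positive definite matrix. Then the maximum of |h·w + x·w|² over all row vectors x with √(x Q xᴴ) ≤ ε equals (|h·w| + ε·√(wᴴ Q⁻¹ w))². -/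
open scoped BigOperators ComplexOrder

open Matrix in
private lemma cs_aux (N : ℕ) (Q : Matrix (Fin N) (Fin N) ℂ) (hQ : Q.PosDef) (a b : Fin N → ℂ) :
    ‖star a ⬝ᵥ Q *ᵥ b‖ ^ 2 ≤ (star a ⬝ᵥ Q *ᵥ a).re * (star b ⬝ᵥ Q *ᵥ b).re := by
  letI core : PreInnerProductSpace.Core ℂ (Fin N → ℂ) :=
    { inner := fun x y => star x ⬝ᵥ Q *ᵥ y
      conj_inner_symm := fun x y => by
        rw [star_dotProduct, starRingEnd_apply, star_star, star_mulVec, dotProduct_mulVec,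
          hQ.isHermitian.eq]
      re_inner_nonneg := fun x => by
        by_cases h : x = 0
        · simp [h]
        · exact le_of_lt (hQ.re_dotProduct_pos h)
      add_left := by simp only [star_add, add_dotProduct, forall_const, implies_true]
      smul_left := fun x y r => by
        rw [← smul_eq_mul, ← smul_dotProduct, starRingEnd_apply, ← star_smul] }
  letI : Inner ℂ (Fin N → ℂ) := core.toInner
  have key := InnerProductSpace.Core.inner_mul_inner_self_le (𝕜 := ℂ) (F := Fin N → ℂ) a b
  have hsym : ‖(inner ℂ b a : ℂ)‖ = ‖(inner ℂ a b : ℂ)‖ := by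
    rw [← core.conj_inner_symm a b]; exact (RCLike.norm_conj _).symm
  rw [hsym, ← sq] at key
  exact key

/-- Robust beamforming lemma (maximum part): for a row vector `h`, column vector `w`,
radius `ε > 0` and Hermitian positive definite `Q`, the maximum of `|h·w + x·w|²`
over row vectors `x` with `√(x Q xᴴ) ≤ ε` equals `(|h·w| + ε √(wᴴ Q⁻¹ w))²`. -/
theorem stmt_1 (N : ℕ) (h w : Fin N → ℂ) (ε : ℝ) (hε : 0 < ε)
    (Q : Matrix (Fin N) (Fin N) ℂ) (hQ : Q.PosDef) :
    IsGreatest {v : ℝ | ∃ x : Fin N → ℂ,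
        Real.sqrt (∑ i, ∑ j, x i * Q i j * (starRingEnd ℂ) (x j)).re ≤ ε ∧
        v = ‖∑ i, (h i + x i) * w i‖ ^ 2}
      ((‖∑ i, h i * w i‖ +
          ε * Real.sqrt (∑ i, ∑ j, (starRingEnd ℂ) (w i) * Q⁻¹ i j * w j).re) ^ 2) := by
  open Matrix in
  -- notation and basic rewrites
  have hsum1 : ∀ x : Fin N → ℂ, (∑ i, ∑ j, x i * Q i j * (starRingEnd ℂ) (x j))
      = star (star x) ⬝ᵥ Q *ᵥ (star x) := by
    intro x
    simp only [mulVec, dotProduct, star_star, Pi.star_apply, RCLike.star_def,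
      Complex.conj_conj, Finset.mul_sum, mul_assoc]
  have hsum2 : (∑ i, ∑ j, (starRingEnd ℂ) (w i) * Q⁻¹ i j * w j) = star w ⬝ᵥ Q⁻¹ *ᵥ w := by
    simp only [mulVec, dotProduct, star_star, Pi.star_apply, RCLike.star_def,
      Complex.conj_conj, Finset.mul_sum, mul_assoc]
  have hsum3 : ∀ x : Fin N → ℂ, (∑ i, (h i + x i) * w i) = (∑ i, h i * w i) + x ⬝ᵥ w := by
    intro x; simp [dotProduct, add_mul, Finset.sum_add_distrib]
  set s : ℂ := ∑ i, h i * w i with hs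
  set t : ℝ := (∑ i, ∑ j, (starRingEnd ℂ) (w i) * Q⁻¹ i j * w j).re with ht
  set r : ℝ := Real.sqrt t with hrdef
  have hr0 : 0 ≤ r := Real.sqrt_nonneg t
  -- t is the real value of the Q⁻¹ quadratic form
  have htC : (star w ⬝ᵥ Q⁻¹ *ᵥ w : ℂ) = (t : ℂ) := by
    have hconj : (starRingEnd ℂ) (star w ⬝ᵥ Q⁻¹ *ᵥ w) = star w ⬝ᵥ Q⁻¹ *ᵥ w := by
      rw [starRingEnd_apply, ← star_dotProduct, star_mulVec, hQ.inv.isHermitian.eq,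
        ← dotProduct_mulVec]
    rw [ht, hsum2]
    exact (Complex.conj_eq_iff_re.mp hconj).symm
  set u : Fin N → ℂ := Q⁻¹ *ᵥ w with hu
  have hQu : Q *ᵥ u = w := by
    rw [hu, Matrix.mulVec_mulVec, Matrix.mul_nonsing_inv _ hQ.det_pos.ne'.isUnit,
      Matrix.one_mulVec]
  have hswu : star w ⬝ᵥ u = (t : ℂ) := htC
  have huw : star u ⬝ᵥ w = (t : ℂ) := by
    have : star u ⬝ᵥ w = (starRingEnd ℂ) (star w ⬝ᵥ u) := by
      simp [dotProduct, map_sum, mul_comm]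
    rw [this, hswu]
    simp
  have huQu : (star u ⬝ᵥ Q *ᵥ u : ℂ) = (t : ℂ) := by rw [hQu, huw]
  have ht0 : 0 ≤ t := by
    have : ((t : ℂ)).re = t := Complex.ofReal_re t
    by_cases hw : w = 0
    · simp [ht, hw]
    · have := hQ.inv.re_dotProduct_pos hw
      rw [ht, hsum2]; exact this.le
  have htr : t = r * r := (Real.mul_self_sqrt ht0).symm
  -- Cauchy–Schwarz bound on |x ⬝ᵥ w|
  have hCS : ∀ x : Fin N → ℂ,
      ‖x ⬝ᵥ w‖ ^ 2 ≤ (star (star x) ⬝ᵥ Q *ᵥ (star x)).re * t := by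
    intro x
    have hx : x ⬝ᵥ w = star (star x) ⬝ᵥ Q *ᵥ u := by rw [star_star, hQu]
    have := cs_aux N Q hQ (star x) u
    rw [huQu] at this
    simpa [hx] using this
  constructor
  · -- membership: the maximum is attained
    by_cases hw : w = 0
    · refine ⟨0, ?_, ?_⟩
      · simp [le_of_lt hε]
      · have : t = 0 := by simp [ht, hw]
        simp [hs, hw, hrdef, this]
    · have htpos : 0 < t := by
        have := hQ.inv.re_dotProduct_pos hw
        rw [ht, hsum2]; exact this
      have hrpos : 0 < r := Real.sqrt_pos.mpr htpos
      set A : ℝ := ‖s‖ with hA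
      set sgn : ℂ := if s = 0 then 1 else s / (A : ℂ) with hsgn
      set d : ℂ := ((ε / r : ℝ) : ℂ) * sgn with hd
      refine ⟨fun i => d * (starRingEnd ℂ) (u i), ?_, ?_⟩
      · -- the constraint holds with equality
        have hstarx : star (fun i => d * (starRingEnd ℂ) (u i)) = (starRingEnd ℂ) d • u := by
          funext i; simp [mul_comm]
        have habs_sgn : ‖sgn‖ = 1 := by
          rw [hsgn]
          split_ifs with h0
          · simp
          · have hA0 : A ≠ 0 := by
              rw [hA]; exact norm_ne_zero_iff.mpr h0
            have hAabs : ‖((A : ℝ) : ℂ)‖ = A := by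
              rw [Complex.norm_real, Real.norm_eq_abs]
              exact abs_of_nonneg (hA ▸ norm_nonneg s)
            rw [norm_div, hAabs, ← hA]
            exact div_self hA0
        have habsd : ‖d‖ = ε / r := by
          rw [hd, norm_mul, habs_sgn, mul_one, Complex.norm_real, Real.norm_eq_abs,
            abs_of_nonneg (div_nonneg hε.le hr0)]
        have hdd : d * star d = ((‖d‖ ^ 2 : ℝ) : ℂ) := by
          rw [RCLike.star_def, Complex.mul_conj, Complex.normSq_eq_norm_sq]
        have hval : star (star fun i => d * (starRingEnd ℂ) (u i)) ⬝ᵥ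
            Q *ᵥ (star fun i => d * (starRingEnd ℂ) (u i)) = ((ε ^ 2 : ℝ) : ℂ) := by
          rw [hstarx, star_smul, mulVec_smul, hQu, smul_dotProduct, dotProduct_smul, huw,
            starRingEnd_apply, star_star, smul_eq_mul, smul_eq_mul, ← mul_assoc]
          rw [show d * star d = ((‖d‖ ^ 2 : ℝ) : ℂ) from hdd, habsd]
          norm_cast
          rw [htr, div_pow]
          field_simp
        rw [hsum1, hval]
        rw [show ((ε ^ 2 : ℝ) : ℂ).re = ε ^ 2 from Complex.ofReal_re _]
        rw [Real.sqrt_sq hε.le]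
      · -- the value equals the claimed maximum
        rw [hsum3]
        have hxw : (fun i => d * (starRingEnd ℂ) (u i)) ⬝ᵥ w = d * (t : ℂ) := by
          have : (fun i => d * (starRingEnd ℂ) (u i)) ⬝ᵥ w = d * (star u ⬝ᵥ w) := by
            simp only [dotProduct, Pi.star_apply, RCLike.star_def, Finset.mul_sum, mul_assoc]
          rw [this, huw]
        rw [hxw]
        have hdt : d * (t : ℂ) = ((ε * r : ℝ) : ℂ) * sgn := by
          rw [hd, htr]
          push_cast
          field_simp
        rw [hdt]
        by_cases h0 : s = 0
        · rw [hsgn]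
          simp [h0, hA, abs_of_nonneg hε.le, abs_of_nonneg hr0]
        · have hA0 : (0 : ℝ) < A := by
            simpa [hA] using norm_pos_iff.mpr h0
          have key : ‖s + ((ε * r : ℝ) : ℂ) * sgn‖ = A + ε * r := by
            rw [hsgn, if_neg h0]
            have hAne : (A : ℂ) ≠ 0 := by exact_mod_cast hA0.ne'
            have : s + ((ε * r : ℝ) : ℂ) * (s / (A : ℂ))
                = s * ((((A + ε * r) / A : ℝ)) : ℂ) := by
              push_cast
              field_simp
            rw [this, norm_mul, Complex.norm_real, Real.norm_eq_abs,
              abs_of_nonneg (div_nonneg (by positivity) hA0.le)]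
            rw [← hA]
            field_simp
          rw [key]
  · -- upper bound
    rintro v ⟨x, hx, rfl⟩
    rw [hsum1] at hx
    rw [hsum3]
    set Cx : ℝ := (star (star x) ⬝ᵥ Q *ᵥ (star x)).re with hCx
    have hCx0 : 0 ≤ Cx := by
      by_cases h0 : star x = 0
      · simp [hCx, h0]
      · exact (hQ.re_dotProduct_pos h0).le
    have habs : ‖x ⬝ᵥ w‖ ≤ ε * r := by
      have h1 : ‖x ⬝ᵥ w‖ ≤ Real.sqrt (Cx * t) := by
        rw [← Real.sqrt_sq (norm_nonneg (x ⬝ᵥ w))]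
        exact Real.sqrt_le_sqrt (hCS x)
      have h2 : Real.sqrt (Cx * t) = Real.sqrt Cx * r := by
        rw [Real.sqrt_mul hCx0]
      calc ‖x ⬝ᵥ w‖ ≤ Real.sqrt Cx * r := by rw [← h2]; exact h1
        _ ≤ ε * r := mul_le_mul_of_nonneg_right hx hr0
    have : ‖s + x ⬝ᵥ w‖ ≤ ‖s‖ + ε * r := by
      calc ‖s + x ⬝ᵥ w‖ ≤ ‖s‖ + ‖x ⬝ᵥ w‖ :=
            norm_add_le s (x ⬝ᵥ w)
        _ ≤ ‖s‖ + ε * r := by linarith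
    calc ‖s + x ⬝ᵥ w‖ ^ 2 ≤ (‖s‖ + ε * r) ^ 2 :=
          pow_le_pow_left₀ (norm_nonneg _) this 2
      _ = (‖s‖ + ε * r) ^ 2 := rfl
end

section
/- Let h ∈ ℂ^N be a row vector, w ∈ ℂ^N a column vector, and ε ≥ 0. Then the infimum of |h·w + x·w|² over all row vectors x with ‖x‖₂ ≤ ε equals (max(0, |h·w| − ε‖w‖₂))², and the supremum equals (|h·w| + ε‖w‖₂)². -/
open scoped BigOperators

private noncomputable def conjVec {N : ℕ} (x : EuclideanSpace ℂ (Fin N)) : EuclideanSpace ℂ (Fin N) :=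
  (WithLp.equiv 2 (Fin N → ℂ)).symm (fun i => (starRingEnd ℂ) (x i))

private lemma conjVec_apply {N : ℕ} (x : EuclideanSpace ℂ (Fin N)) (i : Fin N) :
    conjVec x i = (starRingEnd ℂ) (x i) := rfl

private lemma conj_norm_eq {N : ℕ} (x : EuclideanSpace ℂ (Fin N)) :
    ‖conjVec x‖ = ‖x‖ := by
  rw [EuclideanSpace.norm_eq, EuclideanSpace.norm_eq]
  simp [conjVec_apply]

private lemma cs_dot {N : ℕ} (x w : EuclideanSpace ℂ (Fin N)) :
    ‖∑ i, x i * w i‖ ≤ ‖x‖ * ‖w‖ := by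
  set x' : EuclideanSpace ℂ (Fin N) := conjVec x with hx'
  have h1 : (inner ℂ x' w : ℂ) = ∑ i, x i * w i := by
    rw [PiLp.inner_apply]
    simp [hx', conjVec_apply, RCLike.inner_apply, mul_comm]
  have h2 := norm_inner_le_norm (𝕜 := ℂ) x' w
  rw [h1] at h2
  calc ‖∑ i, x i * w i‖ ≤ ‖x'‖ * ‖w‖ := h2
    _ = ‖x‖ * ‖w‖ := by rw [conj_norm_eq]

private lemma sum_conj_mul {N : ℕ} (w : EuclideanSpace ℂ (Fin N)) :
    ∑ i, (starRingEnd ℂ) (w i) * w i = ((‖w‖ : ℝ) : ℂ) ^ 2 := by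
  have h1 : (inner ℂ w w : ℂ) = ((‖w‖ : ℝ) : ℂ) ^ 2 := by
    rw [inner_self_eq_norm_sq_to_K]
    norm_cast
  rw [← h1, PiLp.inner_apply]
  simp [RCLike.inner_apply, Complex.conj_mul']

private lemma realize {N : ℕ} (w : EuclideanSpace ℂ (Fin N)) (ε : ℝ) (hε : 0 ≤ ε)
    (t : ℂ) (ht : ‖t‖ ≤ ε * ‖w‖) :
    ∃ x : EuclideanSpace ℂ (Fin N), ‖x‖ ≤ ε ∧ ∑ i, x i * w i = t := by
  by_cases hw : w = 0
  · refine ⟨0, by simpa using hε, ?_⟩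
    have ht0 : t = 0 := by
      have h0 : ‖t‖ ≤ 0 := by simpa [hw] using ht
      simpa using le_antisymm h0 (norm_nonneg t)
    simp [ht0]
  · have hw' : (0:ℝ) < ‖w‖ := norm_pos_iff.mpr hw
    set y : EuclideanSpace ℂ (Fin N) := conjVec w with hy
    set x : EuclideanSpace ℂ (Fin N) := (t / ((‖w‖ : ℝ) : ℂ) ^ 2) • y with hx
    have hxnorm : ‖x‖ = ‖t‖ / ‖w‖ := by
      rw [hx, norm_smul, conj_norm_eq]
      rw [norm_div]
      have : ‖(((‖w‖ : ℝ) : ℂ)) ^ 2‖ = ‖w‖ ^ 2 := by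
        rw [norm_pow, Complex.norm_real, Real.norm_of_nonneg (norm_nonneg w)]
      rw [this]
      field_simp
    refine ⟨x, ?_, ?_⟩
    · rw [hxnorm, div_le_iff₀ hw']
      exact ht
    · have hxi : ∀ i, x i = (t / ((‖w‖ : ℝ) : ℂ) ^ 2) * (starRingEnd ℂ) (w i) := by
        intro i; rfl
      have : ∑ i, x i * w i = (t / ((‖w‖ : ℝ) : ℂ) ^ 2) * ∑ i, (starRingEnd ℂ) (w i) * w i := by
        rw [Finset.mul_sum]
        refine Finset.sum_congr rfl fun i _ => ?_
        rw [hxi i]; ring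
      rw [this, sum_conj_mul]
      have hne : (((‖w‖ : ℝ) : ℂ)) ^ 2 ≠ 0 := by
        simp [hw'.ne']
      have hne' : ((‖w‖ : ℝ) : ℂ) ≠ 0 := by simp [hw'.ne']
      field_simp

/-- Special case `Q = I` of the robust beamforming lemma: with Euclidean-ball
uncertainty of radius `ε ≥ 0`, the infimum of `|h·w + x·w|²` is
`(max 0 (|h·w| − ε‖w‖))²` and the supremum is `(|h·w| + ε‖w‖)²`. -/
theorem stmt_2 (N : ℕ) (h : EuclideanSpace ℂ (Fin N)) (w : EuclideanSpace ℂ (Fin N))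
    (ε : ℝ) (hε : 0 ≤ ε) :
    sInf {v : ℝ | ∃ x : EuclideanSpace ℂ (Fin N), ‖x‖ ≤ ε ∧
        v = ‖∑ i, (h i + x i) * w i‖ ^ 2}
      = (max 0 (‖∑ i, h i * w i‖ - ε * ‖w‖)) ^ 2 ∧
    sSup {v : ℝ | ∃ x : EuclideanSpace ℂ (Fin N), ‖x‖ ≤ ε ∧
        v = ‖∑ i, (h i + x i) * w i‖ ^ 2}
      = (‖∑ i, h i * w i‖ + ε * ‖w‖) ^ 2 := by
  set c : ℂ := ∑ i, h i * w i with hc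
  set a : ℝ := ‖c‖ with ha
  set r : ℝ := ε * ‖w‖ with hr
  have hr0 : 0 ≤ r := mul_nonneg hε (norm_nonneg w)
  have ha0 : 0 ≤ a := norm_nonneg c
  set S : Set ℝ := {v : ℝ | ∃ x : EuclideanSpace ℂ (Fin N), ‖x‖ ≤ ε ∧
        v = ‖∑ i, (h i + x i) * w i‖ ^ 2} with hS
  -- every element of S is of the form |c + t|² with |t| ≤ r
  have hform : ∀ v ∈ S, ∃ t : ℂ, ‖t‖ ≤ r ∧ v = ‖c + t‖ ^ 2 := by
    rintro v ⟨x, hx, rfl⟩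
    refine ⟨∑ i, x i * w i, ?_, ?_⟩
    · calc ‖∑ i, x i * w i‖ ≤ ‖x‖ * ‖w‖ := cs_dot x w
        _ ≤ ε * ‖w‖ := by
            exact mul_le_mul_of_nonneg_right hx (norm_nonneg w)
    · congr 2
      rw [hc, ← Finset.sum_add_distrib]
      refine Finset.sum_congr rfl fun i _ => ?_
      ring
  -- conversely
  have hback : ∀ t : ℂ, ‖t‖ ≤ r → ‖c + t‖ ^ 2 ∈ S := by
    intro t ht
    obtain ⟨x, hx1, hx2⟩ := realize w ε hε t ht
    refine ⟨x, hx1, ?_⟩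
    congr 2
    rw [hc, ← hx2, ← Finset.sum_add_distrib]
    refine Finset.sum_congr rfl fun i _ => ?_
    ring
  -- lower/upper bounds
  have hlb : ∀ v ∈ S, (max 0 (a - r)) ^ 2 ≤ v := by
    intro v hv
    obtain ⟨t, ht, rfl⟩ := hform v hv
    have h1 : max 0 (a - r) ≤ ‖c + t‖ := by
      apply max_le
      · exact norm_nonneg _
      · have := norm_sub_le c (-t)
        have h2 : a ≤ ‖c + t‖ + ‖t‖ := by
          calc a = ‖(c + t) + (-t)‖ := by rw [ha]; ring_nf
            _ ≤ ‖c + t‖ + ‖-t‖ := norm_add_le _ _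
            _ = ‖c + t‖ + ‖t‖ := by simp
        linarith
    exact pow_le_pow_left₀ (le_max_left 0 (a - r)) h1 2
  have hub : ∀ v ∈ S, v ≤ (a + r) ^ 2 := by
    intro v hv
    obtain ⟨t, ht, rfl⟩ := hform v hv
    have h1 : ‖c + t‖ ≤ a + r := by
      calc ‖c + t‖ ≤ ‖c‖ + ‖t‖ := norm_add_le _ _
        _ = a + ‖t‖ := by rw [ha]
        _ ≤ a + r := by linarith
    exact pow_le_pow_left₀ (norm_nonneg _) h1 2
  -- attainment of the min
  have hminmem : (max 0 (a - r)) ^ 2 ∈ S := by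
    by_cases hc0 : c = 0
    · have : max 0 (a - r) = 0 := by
        rw [ha, hc0]
        simp [hr0]
      rw [this]
      have := hback 0 (by simpa using hr0)
      simpa [hc0] using this
    · have ha0' : 0 < a := by
        rw [ha]
        exact norm_pos_iff.mpr hc0
      set m : ℝ := min r a with hm
      have hm0 : 0 ≤ m := le_min hr0 ha0
      have hma : m ≤ a := min_le_right r a
      set t : ℂ := -(((m / a : ℝ) : ℂ)) * c with htdef
      have htn : ‖t‖ ≤ r := by
        rw [htdef]
        rw [norm_mul, norm_neg, Complex.norm_real, Real.norm_of_nonneg (by positivity)]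
        rw [← ha]
        rw [div_mul_cancel₀ _ ha0'.ne']
        exact min_le_left r a
      have habs : ‖c + t‖ = max 0 (a - r) := by
        have h1 : c + t = ((1 - m / a : ℝ) : ℂ) * c := by
          rw [htdef]; push_cast; ring
        rw [h1, norm_mul, ← ha, Complex.norm_real, Real.norm_eq_abs]
        have h2 : 0 ≤ 1 - m / a := by
          rw [sub_nonneg, div_le_one ha0']
          exact hma
        rw [abs_of_nonneg h2]
        have h3 : (1 - m / a) * a = a - m := by
          field_simp
        rw [h3]
        rcases le_total r a with hra | hra
        · rw [hm, min_eq_left hra, max_eq_right (by linarith)]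
        · rw [hm, min_eq_right hra, max_eq_left (by linarith)]
          ring
      have := hback t htn
      rwa [habs] at this
  -- attainment of the max
  have hmaxmem : (a + r) ^ 2 ∈ S := by
    by_cases hc0 : c = 0
    · have ht : ‖((r : ℝ) : ℂ)‖ ≤ r := by
        rw [Complex.norm_real, Real.norm_of_nonneg hr0]
      have := hback ((r : ℝ) : ℂ) ht
      have habs : ‖c + ((r : ℝ) : ℂ)‖ = a + r := by
        rw [hc0, zero_add, Complex.norm_real, Real.norm_of_nonneg hr0, ha, hc0]
        simp
      rwa [habs] at this
    · have ha0' : 0 < a := by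
        rw [ha]; exact norm_pos_iff.mpr hc0
      set t : ℂ := ((r / a : ℝ) : ℂ) * c with htdef
      have htn : ‖t‖ ≤ r := by
        rw [htdef, norm_mul, Complex.norm_real, Real.norm_of_nonneg (by positivity),
          ← ha, div_mul_cancel₀ _ ha0'.ne']
      have habs : ‖c + t‖ = a + r := by
        have h1 : c + t = ((1 + r / a : ℝ) : ℂ) * c := by
          rw [htdef]; push_cast; ring
        rw [h1, norm_mul, ← ha, Complex.norm_real, Real.norm_of_nonneg (by positivity)]
        field_simp
      have := hback t htn
      rwa [habs] at this
  have hbddb : BddBelow S := ⟨(max 0 (a - r)) ^ 2, hlb⟩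
  have hbdda : BddAbove S := ⟨(a + r) ^ 2, hub⟩
  constructor
  · exact le_antisymm (csInf_le hbddb hminmem) (le_csInf ⟨_, hminmem⟩ hlb)
  · exact le_antisymm (csSup_le ⟨_, hmaxmem⟩ hub) (le_csSup hbdda hmaxmem)
end

section
/- With the worst-case SINR tsinr_m(w) = (max(0,|h̃_{m,m}·w_m| − ε_{m,m}‖w_m‖))² / (Σ_{n≠m}(|h̃_{m,n}·w_n| + ε_{m,n}‖w_n‖)² + 1), scaling all precoders by a common factor 1/√c with 0 < c < 1 strictly increases tsinr_m for every m (provided the numerator is positive). -/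
open scoped BigOperators

/-- Worst-case SINR of user `m` for precoders `w`, channel estimates `h m n` and
uncertainty radii `ε m n`. -/
noncomputable def tsinr12 {M N : ℕ} (h : Fin M → Fin M → EuclideanSpace ℂ (Fin N))
    (ε : Fin M → Fin M → ℝ) (w : Fin M → EuclideanSpace ℂ (Fin N)) (m : Fin M) : ℝ :=
  (max 0 (‖∑ i, h m m i * w m i‖ - ε m m * ‖w m‖)) ^ 2 /
    ((∑ n ∈ Finset.univ.erase m,
        (‖∑ i, h m n i * w n i‖ + ε m n * ‖w n‖) ^ 2) + 1)

private lemma key12 (A B s : ℝ) (hA : 0 < A) (hB : 0 ≤ B) (hs : 1 < s) :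
    A ^ 2 / (B + 1) < (s * A) ^ 2 / (s ^ 2 * B + 1) := by
  have hden1 : (0:ℝ) < B + 1 := by linarith
  have hden2 : (0:ℝ) < s ^ 2 * B + 1 := by positivity
  rw [div_lt_div_iff₀ hden1 hden2, mul_pow]
  have hA2 : A ^ 2 < s ^ 2 * A ^ 2 := by
    nlinarith [mul_pos (mul_pos (show (0:ℝ) < s - 1 by linarith)
      (show (0:ℝ) < s + 1 by linarith)) (mul_pos hA hA)]
  nlinarith [hA2, hB, sq_nonneg A, sq_nonneg s]

/-- Scaling all precoders by `1/√c` with `0 < c < 1` strictly increases the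
worst-case SINR of every user whose worst-case signal numerator is positive. -/
theorem stmt_12 (M N : ℕ)
    (h : Fin M → Fin M → EuclideanSpace ℂ (Fin N))
    (ε : Fin M → Fin M → ℝ) (hε : ∀ m n, 0 ≤ ε m n)
    (w : Fin M → EuclideanSpace ℂ (Fin N))
    (c : ℝ) (hc0 : 0 < c) (hc1 : c < 1) (m : Fin M)
    (hnum : 0 < ‖∑ i, h m m i * w m i‖ - ε m m * ‖w m‖) :
    tsinr12 h ε w m <
      tsinr12 h ε (fun n => ((Real.sqrt c)⁻¹ : ℝ) • w n) m := by
  set s : ℝ := (Real.sqrt c)⁻¹ with hs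
  have hsc : Real.sqrt c < 1 := by
    nlinarith [Real.sq_sqrt hc0.le, Real.sqrt_nonneg c]
  have hs1 : 1 < s := by
    rw [hs]; exact (one_lt_inv₀ (Real.sqrt_pos.mpr hc0)).mpr hsc
  have hs0 : 0 < s := lt_trans one_pos hs1
  -- scaling facts
  have habs : ∀ n : Fin M,
      ‖∑ i, h m n i * (s • w n) i‖ = s * ‖∑ i, h m n i * w n i‖ := by
    intro n
    have : (∑ i, h m n i * (s • w n) i) = (s : ℂ) * ∑ i, h m n i * w n i := by
      rw [Finset.mul_sum]
      refine Finset.sum_congr rfl fun i _ => ?_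
      simp [PiLp.smul_apply, Complex.real_smul]
      ring
    rw [this, norm_mul]
    simp [abs_of_pos hs0]
  have hnorm : ∀ n : Fin M, ‖s • w n‖ = s * ‖w n‖ := by
    intro n
    rw [norm_smul]
    simp [abs_of_pos hs0]
  unfold tsinr12
  simp only [habs, hnorm]
  set A := ‖∑ i, h m m i * w m i‖ - ε m m * ‖w m‖ with hA
  have hmaxA : max 0 A = A := max_eq_right hnum.le
  have hmaxsA : max 0 (s * ‖∑ i, h m m i * w m i‖ - ε m m * (s * ‖w m‖))
      = s * A := by
    rw [max_eq_right]
    · ring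
    · nlinarith
  rw [hmaxA, hmaxsA]
  set B := ∑ n ∈ Finset.univ.erase m,
      (‖∑ i, h m n i * w n i‖ + ε m n * ‖w n‖) ^ 2 with hB
  have hterm : ∀ n ∈ Finset.univ.erase m,
      (s * ‖∑ i, h m n i * w n i‖ + ε m n * (s * ‖w n‖)) ^ 2
        = s ^ 2 * (‖∑ i, h m n i * w n i‖ + ε m n * ‖w n‖) ^ 2 := by
    intro n _; ring
  rw [Finset.sum_congr rfl hterm, ← Finset.mul_sum, ← hB]
  exact key12 _ _ _ hnum (Finset.sum_nonneg fun n _ => sq_nonneg _) hs1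
end

section
/- Let h̃ ∈ ℂ^{1×N}, w ∈ ℂ^N a column vector, ε ≥ 0, and t > 0, a > 0 real. Suppose h̃·w is real and nonnegative. Then the condition (max(0, |(h̃)·w| − ε‖w‖))² ≥ a·t² (worst-case signal power at least a·t²) is equivalent to the second-order cone constraint ε‖w‖₂ ≤ h̃·w − √a·t. -/
open scoped BigOperators

/-- SOC reformulation: if `h̃·w` is real and nonnegative, then
`(max 0 (|h̃·w| − ε‖w‖))² ≥ a t²` is equivalent to the second-order cone
constraint `ε‖w‖ ≤ h̃·w − √a · t`. -/
theorem stmt_15 (N : ℕ) (h w : EuclideanSpace ℂ (Fin N)) (ε t a : ℝ)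
    (hε : 0 ≤ ε) (ht : 0 < t) (ha : 0 < a)
    (him : (∑ i, h i * w i).im = 0) (hre : 0 ≤ (∑ i, h i * w i).re) :
    a * t ^ 2 ≤ (max 0 (‖(∑ i, h i * w i)‖ - ε * ‖w‖)) ^ 2 ↔
      ε * ‖w‖ ≤ (∑ i, h i * w i).re - Real.sqrt a * t := by
  set s := (∑ i, h i * w i) with hs
  have habs : ‖s‖ = s.re := by
    have : s = (s.re : ℂ) := Complex.ext rfl (by simp [him])
    rw [this, Complex.norm_real, Real.norm_eq_abs, abs_of_nonneg hre, Complex.ofReal_re]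
  rw [habs]
  have hsq : a * t ^ 2 = (Real.sqrt a * t) ^ 2 := by
    rw [mul_pow, Real.sq_sqrt ha.le]
  have hst : 0 < Real.sqrt a * t := mul_pos (Real.sqrt_pos.2 ha) ht
  set x := s.re - ε * ‖w‖ with hx
  constructor
  · intro hle
    rcases le_or_gt x 0 with hx0 | hx0
    · rw [max_eq_left hx0] at hle
      nlinarith
    · rw [max_eq_right hx0.le] at hle
      rw [hsq] at hle
      nlinarith
  · intro hle
    have hx0 : Real.sqrt a * t ≤ x := by linarith
    rw [max_eq_right (hst.le.trans hx0), hsq]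
    nlinarith
end
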